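/- arXiv:1803.04657 — 9 statements merged into one kernel-verified Lean document; each statement's English description precedes it below -/
import Mathlib

section
/- For every real number α < 0, h(α) < 0; that is, 5·6^α + 8^α < 2·5^α + 4·7^α. -/
noncomputable def f (α : ℝ) : ℝ := 2 * (5:ℝ) ^ α - 6 * (6:ℝ) ^ α + 4 * (7:ℝ) ^ α
noncomputable def g (α : ℝ) : ℝ := 2 * (6:ℝ) ^ α - (5:ℝ) ^ α - (7:ℝ) ^ α
noncomputable def h (α : ℝ) : ℝ := 5 * (6:ℝ) ^ α - 2 * (5:ℝ) ^ α - 4 * (7:ℝ) ^ α + (8:ℝ) ^ α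

/-- For every α < 0, h(α) < 0; that is, 5·6^α + 8^α < 2·5^α + 4·7^α. -/
theorem h_neg_of_neg (α : ℝ) (hα : α < 0) :
    h α < 0 ∧ 5 * (6:ℝ) ^ α + (8:ℝ) ^ α < 2 * (5:ℝ) ^ α + 4 * (7:ℝ) ^ α := by
  set u := (5:ℝ) ^ α with hu
  set v := (6:ℝ) ^ α with hv
  set w := (7:ℝ) ^ α with hw
  set z := (8:ℝ) ^ α with hz
  have hv0 : (0:ℝ) < v := Real.rpow_pos_of_pos (by norm_num) α
  have hw0 : (0:ℝ) < w := Real.rpow_pos_of_pos (by norm_num) α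
  -- v > w
  have hvw : w < v := Real.rpow_lt_rpow_of_neg (by norm_num) (by norm_num) hα
  -- u * w = 35^α > 36^α = v * v
  have h1 : v * v < u * w := by
    rw [hu, hv, hw, ← Real.mul_rpow (by norm_num) (by norm_num),
      ← Real.mul_rpow (by norm_num) (by norm_num)]
    exact Real.rpow_lt_rpow_of_neg (by norm_num) (by norm_num) hα
  -- v * z = 48^α > 49^α = w * w
  have h2 : w * w < v * z := by
    rw [hv, hw, hz, ← Real.mul_rpow (by norm_num) (by norm_num),
      ← Real.mul_rpow (by norm_num) (by norm_num)]
    exact Real.rpow_lt_rpow_of_neg (by norm_num) (by norm_num) hα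
  -- u * w^3 = 1715^α > 1728^α = v^3 * z
  have h3 : v * v * v * z < u * (w * w * w) := by
    have e1 : u * (w * w * w) = (1715:ℝ) ^ α := by
      rw [hu, hw, ← Real.mul_rpow (by norm_num) (by norm_num),
        ← Real.mul_rpow (by norm_num) (by norm_num),
        ← Real.mul_rpow (by norm_num) (by norm_num)]
      norm_num
    have e2 : v * v * v * z = (1728:ℝ) ^ α := by
      rw [hv, hz, ← Real.mul_rpow (by norm_num) (by norm_num),
        ← Real.mul_rpow (by norm_num) (by norm_num),
        ← Real.mul_rpow (by norm_num) (by norm_num)]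
      norm_num
    rw [e1, e2]
    exact Real.rpow_lt_rpow_of_neg (by norm_num) (by norm_num) hα
  -- second difference positive: v + z > 2 * w
  have fact1 : 2 * w < v + z := by nlinarith [sq_nonneg (v - w), hv0]
  -- third difference positive: u + 3w > 3v + z
  have fact2 : 3 * v + z < u + 3 * w := by
    nlinarith [mul_pos hv0 (mul_pos hw0 (mul_pos hw0 hw0)),
      mul_pos hw0 (mul_pos hw0 (sub_pos.2 hvw)),
      mul_pos (mul_pos hw0 hw0) (mul_pos (sub_pos.2 hvw) (sub_pos.2 hvw)),
      mul_pos hv0 hw0, sq_nonneg (v - w),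
      mul_lt_mul_of_pos_left h2 (mul_pos (sub_pos.2 hvw) (sub_pos.2 hvw)),
      mul_lt_mul_of_pos_left h3 hv0]
  have key : 5 * v + z < 2 * u + 4 * w := by linarith
  constructor
  · simp only [h]; linarith
  · exact key
end

section
/- For every real number α with −3 ≤ α < 0, f(α) < 0. -/
lemma rpow_convex_bound (b : ℝ) (hb : 0 < b) (l : ℝ) (hl0 : 0 ≤ l) (hl1 : l ≤ 1) :
    b ^ (-3 * l : ℝ) ≤ l * b ^ (-3 : ℝ) + (1 - l) := by
  have hc := convexOn_exp.2 (Set.mem_univ (-3 * Real.log b)) (Set.mem_univ 0)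
    (show (0:ℝ) ≤ l from hl0) (show (0:ℝ) ≤ 1 - l by linarith)
    (show l + (1 - l) = 1 by ring)
  simp only [smul_eq_mul, mul_zero, add_zero, Real.exp_zero, mul_one] at hc
  rw [Real.rpow_def_of_pos hb, Real.rpow_def_of_pos hb]
  calc Real.exp (Real.log b * (-3 * l)) = Real.exp (l * (-3 * Real.log b)) := by ring_nf
    _ ≤ l * Real.exp (-3 * Real.log b) + (1 - l) := hc
    _ = l * Real.exp (Real.log b * (-3)) + (1 - l) := by ring_nf

/-- For every α with −3 ≤ α < 0, f(α) < 0. -/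
theorem f_neg_on_Ico (α : ℝ) (h1 : -3 ≤ α) (h2 : α < 0) : f α < 0 := by
  set l : ℝ := -α / 3 with hl
  have hα : α = -3 * l := by rw [hl]; ring
  have hl0 : 0 < l := by rw [hl]; linarith
  have hl1 : l ≤ 1 := by rw [hl]; linarith
  have h5v : ((5:ℝ)/6) ^ (-3 : ℝ) = 216/125 := by
    rw [show (-3:ℝ) = ((-3:ℤ):ℝ) by norm_num, Real.rpow_intCast]
    norm_num
  have h7v : ((7:ℝ)/6) ^ (-3 : ℝ) = 216/343 := by
    rw [show (-3:ℝ) = ((-3:ℤ):ℝ) by norm_num, Real.rpow_intCast]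
    norm_num
  have h5 := rpow_convex_bound (5/6) (by norm_num) l hl0.le hl1
  have h7 := rpow_convex_bound (7/6) (by norm_num) l hl0.le hl1
  rw [h5v] at h5
  rw [h7v] at h7
  rw [← hα] at h5 h7
  have h6pos : (0:ℝ) < (6:ℝ) ^ α := Real.rpow_pos_of_pos (by norm_num) α
  have e5 : (5:ℝ) ^ α = ((5:ℝ)/6) ^ α * (6:ℝ) ^ α := by
    rw [← Real.mul_rpow (by norm_num) (by norm_num)]; norm_num
  have e7 : (7:ℝ) ^ α = ((7:ℝ)/6) ^ α * (6:ℝ) ^ α := by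
    rw [← Real.mul_rpow (by norm_num) (by norm_num)]; norm_num
  have hsplit : f α = (6:ℝ) ^ α * (2 * ((5:ℝ)/6) ^ α + 4 * ((7:ℝ)/6) ^ α - 6) := by
    unfold f; rw [e5, e7]; ring
  have hψ : 2 * ((5:ℝ)/6) ^ α + 4 * ((7:ℝ)/6) ^ α - 6 < 0 := by linarith
  rw [hsplit]
  exact mul_neg_of_pos_of_neg h6pos hψ
end

section
/- For every real number α with −5.3 ≤ α ≤ −3.2, f(α) + g(α) < 0; that is, 5^α + 3·7^α < 4·6^α on this interval. -/
/-- If `x ^ n ≤ c ^ d` with `e * d = n`, then `x ^ e ≤ c` (real powers). -/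
lemma rpow_le_aux {x c : ℝ} (hx : 0 ≤ x) (hc : 0 ≤ c) {e : ℝ} {n d : ℕ}
    (hd : d ≠ 0) (he : e * d = n) (hpow : x ^ n ≤ c ^ d) : x ^ e ≤ c := by
  have key : (x ^ e) ^ d = x ^ n := by
    rw [← Real.rpow_natCast (x ^ e) d, ← Real.rpow_mul hx, he, Real.rpow_natCast]
  exact le_of_pow_le_pow_left₀ hd hc (key ▸ hpow)

/-- `α ↦ b ^ α` is convex for `b > 0`. -/
lemma convexOn_rpow_base {b : ℝ} (hb : 0 < b) :
    ConvexOn ℝ Set.univ (fun α : ℝ => b ^ α) := by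
  have hcomp := convexOn_exp.comp_affineMap
    (((LinearMap.id : ℝ →ₗ[ℝ] ℝ).smulRight (Real.log b)).toAffineMap)
  have heq : (Real.exp ∘ ⇑((LinearMap.id : ℝ →ₗ[ℝ] ℝ).smulRight (Real.log b)).toAffineMap)
      = fun α : ℝ => b ^ α := by
    funext α
    simp [Real.rpow_def_of_pos hb, mul_comm]
  rw [heq] at hcomp
  simpa using hcomp

/-- For every α with −5.3 ≤ α ≤ −3.2, f(α) + g(α) < 0;
that is, 5^α + 3·7^α < 4·6^α on this interval. -/
theorem fg_neg_on_Icc (α : ℝ) (h1 : -5.3 ≤ α) (h2 : α ≤ -3.2) :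
    f α + g α < 0 ∧ (5:ℝ) ^ α + 3 * (7:ℝ) ^ α < 4 * (6:ℝ) ^ α := by
  -- the convex function ψ
  set ψ : ℝ → ℝ := fun t => (5/6:ℝ) ^ t + 3 * (7/6:ℝ) ^ t with hψdef
  have hconv : ConvexOn ℝ Set.univ ψ := by
    have h1 := convexOn_rpow_base (show (0:ℝ) < 5/6 by norm_num)
    have h2 := (convexOn_rpow_base (show (0:ℝ) < 7/6 by norm_num)).smul
      (show (0:ℝ) ≤ 3 by norm_num)
    have := h1.add h2
    exact this
  -- endpoint bounds
  have e56 : ((5/6:ℝ)) ^ (-5.3 : ℝ) = (6/5:ℝ) ^ (5.3 : ℝ) := by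
    rw [show (-5.3 : ℝ) = -(5.3) by norm_num, Real.rpow_neg (by norm_num),
      ← Real.inv_rpow (by norm_num)]
    norm_num
  have e76 : ((7/6:ℝ)) ^ (-5.3 : ℝ) = (6/7:ℝ) ^ (5.3 : ℝ) := by
    rw [show (-5.3 : ℝ) = -(5.3) by norm_num, Real.rpow_neg (by norm_num),
      ← Real.inv_rpow (by norm_num)]
    norm_num
  have e56' : ((5/6:ℝ)) ^ (-3.2 : ℝ) = (6/5:ℝ) ^ (3.2 : ℝ) := by
    rw [show (-3.2 : ℝ) = -(3.2) by norm_num, Real.rpow_neg (by norm_num),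
      ← Real.inv_rpow (by norm_num)]
    norm_num
  have e76' : ((7/6:ℝ)) ^ (-3.2 : ℝ) = (6/7:ℝ) ^ (3.2 : ℝ) := by
    rw [show (-3.2 : ℝ) = -(3.2) by norm_num, Real.rpow_neg (by norm_num),
      ← Real.inv_rpow (by norm_num)]
    norm_num
  have b1 : (6/5:ℝ) ^ (5.3 : ℝ) ≤ 2.63 :=
    rpow_le_aux (by norm_num) (by norm_num) (n := 53) (d := 10) (by norm_num)
      (by norm_num) (by norm_num)
  have b2 : (6/7:ℝ) ^ (5.3 : ℝ) ≤ 0.442 :=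
    rpow_le_aux (by norm_num) (by norm_num) (n := 53) (d := 10) (by norm_num)
      (by norm_num) (by norm_num)
  have b3 : (6/5:ℝ) ^ (3.2 : ℝ) ≤ 1.8 :=
    rpow_le_aux (by norm_num) (by norm_num) (n := 16) (d := 5) (by norm_num)
      (by norm_num) (by norm_num)
  have b4 : (6/7:ℝ) ^ (3.2 : ℝ) ≤ 0.62 :=
    rpow_le_aux (by norm_num) (by norm_num) (n := 16) (d := 5) (by norm_num)
      (by norm_num) (by norm_num)
  have hend1 : ψ (-5.3) < 4 := by
    simp only [hψdef, e56, e76]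
    nlinarith [b1, b2]
  have hend2 : ψ (-3.2) < 4 := by
    simp only [hψdef, e56', e76']
    nlinarith [b3, b4]
  -- convexity bound on the interval
  have hseg : α ∈ segment ℝ (-5.3 : ℝ) (-3.2 : ℝ) := by
    rw [segment_eq_Icc (by norm_num : (-5.3:ℝ) ≤ -3.2)]
    exact ⟨h1, h2⟩
  have hmax : ψ α ≤ max (ψ (-5.3)) (ψ (-3.2)) :=
    hconv.le_on_segment (Set.mem_univ _) (Set.mem_univ _) hseg
  have hψα : ψ α < 4 := lt_of_le_of_lt hmax (max_lt hend1 hend2)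
  -- convert back
  have h6 : (0:ℝ) < (6:ℝ) ^ α := Real.rpow_pos_of_pos (by norm_num) α
  have e5 : ((5/6:ℝ)) ^ α = (5:ℝ) ^ α / (6:ℝ) ^ α :=
    Real.div_rpow (by norm_num : (0:ℝ) ≤ 5) (by norm_num : (0:ℝ) ≤ 6) α
  have e7 : ((7/6:ℝ)) ^ α = (7:ℝ) ^ α / (6:ℝ) ^ α :=
    Real.div_rpow (by norm_num : (0:ℝ) ≤ 7) (by norm_num : (0:ℝ) ≤ 6) α
  have h' : ((5:ℝ) ^ α + 3 * (7:ℝ) ^ α) / (6:ℝ) ^ α < 4 := by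
    have : ((5:ℝ) ^ α + 3 * (7:ℝ) ^ α) / (6:ℝ) ^ α
        = (5:ℝ) ^ α / (6:ℝ) ^ α + 3 * ((7:ℝ) ^ α / (6:ℝ) ^ α) := by ring
    rw [this, ← e5, ← e7]
    exact hψα
  have hmain : (5:ℝ) ^ α + 3 * (7:ℝ) ^ α < 4 * (6:ℝ) ^ α := by
    have := (div_lt_iff₀ h6).mp h'
    linarith
  refine ⟨?_, hmain⟩
  simp only [f, g]
  linarith
end

section
/- For every real number α ≤ −5.6, f(α) + g(α) > 0; that is, 5^α + 3·7^α > 4·6^α on this range. -/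
namespace FGAux

lemma log65_gt : (0.18:ℝ) < Real.log (6/5) := by
  rw [Real.lt_log_iff_exp_lt (by norm_num : (0:ℝ) < 6/5)]
  have h8 : Real.exp (-0.18) = Real.exp (-0.0225) ^ (8:ℕ) := by
    rw [← Real.exp_nat_mul]; norm_num
  have hb : (1 - 0.0225 : ℝ) ≤ Real.exp (-0.0225) := by
    have := Real.add_one_le_exp (-0.0225 : ℝ); linarith
  have h1 : (5/6:ℝ) < Real.exp (-0.18) := by
    calc (5/6:ℝ) < (1 - 0.0225:ℝ) ^ (8:ℕ) := by norm_num
      _ ≤ Real.exp (-0.0225) ^ (8:ℕ) := pow_le_pow_left₀ (by norm_num) hb 8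
      _ = Real.exp (-0.18) := h8.symm
  have hmul : Real.exp 0.18 * Real.exp (-0.18) = 1 := by
    rw [← Real.exp_add]; norm_num
  nlinarith [Real.exp_pos (0.18:ℝ), Real.exp_pos (-0.18:ℝ)]

lemma log76_lt : Real.log (7/6) < (0.16:ℝ) := by
  rw [Real.log_lt_iff_lt_exp (by norm_num : (0:ℝ) < 7/6)]
  have h4 : Real.exp (0.16) = Real.exp (0.04) ^ (4:ℕ) := by
    rw [← Real.exp_nat_mul]; norm_num
  have hb : (1 + 0.04 : ℝ) ≤ Real.exp (0.04) := by
    have := Real.add_one_le_exp (0.04 : ℝ); linarith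
  calc (7/6:ℝ) < (1 + 0.04:ℝ) ^ (4:ℕ) := by norm_num
    _ ≤ Real.exp (0.04) ^ (4:ℕ) := pow_le_pow_left₀ (by norm_num) hb 4
    _ = Real.exp (0.16) := h4.symm

lemma pow5_eq (x : ℝ) (hx : 0 < x) : (x ^ ((28:ℝ)/5)) ^ (5:ℕ) = x ^ (28:ℕ) := by
  rw [← Real.rpow_natCast (x ^ ((28:ℝ)/5)) 5, ← Real.rpow_mul hx.le, ← Real.rpow_natCast x 28]
  norm_num

lemma A_gt : (2.7755:ℝ) < (6/5:ℝ) ^ ((28:ℝ)/5) := by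
  have h := pow5_eq (6/5) (by norm_num)
  have hnn : (0:ℝ) ≤ (6/5:ℝ) ^ ((28:ℝ)/5) := Real.rpow_nonneg (by norm_num) _
  refine lt_of_pow_lt_pow_left₀ 5 hnn ?_
  rw [h]; norm_num

lemma B_gt : (0.4216:ℝ) < (6/7:ℝ) ^ ((28:ℝ)/5) := by
  have h := pow5_eq (6/7) (by norm_num)
  have hnn : (0:ℝ) ≤ (6/7:ℝ) ^ ((28:ℝ)/5) := Real.rpow_nonneg (by norm_num) _
  refine lt_of_pow_lt_pow_left₀ 5 hnn ?_
  rw [h]; norm_num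

lemma B_lt : (6/7:ℝ) ^ ((28:ℝ)/5) < (0.422:ℝ) := by
  have h := pow5_eq (6/7) (by norm_num)
  refine lt_of_pow_lt_pow_left₀ 5 (by norm_num) ?_
  rw [h]; norm_num

lemma key (t : ℝ) (ht : (28:ℝ)/5 ≤ t) :
    4 < (6/5:ℝ) ^ t + 3 * (6/7:ℝ) ^ t := by
  set s : ℝ := t - 28/5 with hs_def
  have hs : 0 ≤ s := by simp [hs_def]; linarith
  have ht' : t = 28/5 + s := by ring
  have h65 : (6/5:ℝ) ^ t = (6/5:ℝ) ^ ((28:ℝ)/5) * (6/5:ℝ) ^ s := by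
    rw [ht', Real.rpow_add (by norm_num)]
  have h67 : (6/7:ℝ) ^ t = (6/7:ℝ) ^ ((28:ℝ)/5) * (6/7:ℝ) ^ s := by
    rw [ht', Real.rpow_add (by norm_num)]
  -- exponential lower bounds
  have hE1 : 1 + 0.18 * s ≤ (6/5:ℝ) ^ s := by
    rw [Real.rpow_def_of_pos (by norm_num : (0:ℝ) < 6/5)]
    have h1 := Real.add_one_le_exp (Real.log (6/5) * s)
    have h2 : 0.18 * s ≤ Real.log (6/5) * s :=
      mul_le_mul_of_nonneg_right log65_gt.le hs
    linarith
  have hE2 : 1 - 0.16 * s ≤ (6/7:ℝ) ^ s := by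
    rw [Real.rpow_def_of_pos (by norm_num : (0:ℝ) < 6/7)]
    have hlog : Real.log (6/7) = - Real.log (7/6) := by
      rw [← Real.log_inv]; norm_num
    have h1 := Real.add_one_le_exp (Real.log (6/7) * s)
    have h2 : Real.log (7/6) * s ≤ 0.16 * s :=
      mul_le_mul_of_nonneg_right log76_lt.le hs
    rw [hlog] at h1 ⊢
    nlinarith
  have hA := A_gt
  have hB0 := B_gt
  have hB1 := B_lt
  have hE1pos : (0:ℝ) < (6/5:ℝ) ^ s := Real.rpow_pos_of_pos (by norm_num) _
  have hE2pos : (0:ℝ) < (6/7:ℝ) ^ s := Real.rpow_pos_of_pos (by norm_num) _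
  rw [h65, h67]
  have h1 : (2.7755:ℝ) * (1 + 0.18 * s) ≤ (6/5:ℝ) ^ ((28:ℝ)/5) * (6/5:ℝ) ^ s := by
    nlinarith
  have h2 : (0.4216:ℝ) - 0.422 * (0.16 * s) ≤ (6/7:ℝ) ^ ((28:ℝ)/5) * (6/7:ℝ) ^ s := by
    nlinarith
  nlinarith

end FGAux

/-- For every α ≤ −5.6, f(α) + g(α) > 0;
that is, 5^α + 3·7^α > 4·6^α on this range. -/
theorem fg_pos_of_le (α : ℝ) (hα : α ≤ -5.6) :
    f α + g α > 0 ∧ (5:ℝ) ^ α + 3 * (7:ℝ) ^ α > 4 * (6:ℝ) ^ α := by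
  have ht : (28:ℝ)/5 ≤ -α := by linarith [show (5.6:ℝ) = 28/5 by norm_num]
  have hkey := FGAux.key (-α) ht
  have h6pos : (0:ℝ) < (6:ℝ) ^ α := Real.rpow_pos_of_pos (by norm_num) _
  have e1 : (6/5:ℝ) ^ (-α) = (5:ℝ) ^ α / (6:ℝ) ^ α := by
    rw [Real.div_rpow (by norm_num) (by norm_num), Real.rpow_neg (by norm_num),
      Real.rpow_neg (by norm_num), inv_div_inv]
  have e2 : (6/7:ℝ) ^ (-α) = (7:ℝ) ^ α / (6:ℝ) ^ α := by
    rw [Real.div_rpow (by norm_num) (by norm_num), Real.rpow_neg (by norm_num),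
      Real.rpow_neg (by norm_num), inv_div_inv]
  rw [e1, e2] at hkey
  have hx : (5:ℝ) ^ α / (6:ℝ) ^ α * (6:ℝ) ^ α = (5:ℝ) ^ α :=
    div_mul_cancel₀ _ (ne_of_gt h6pos)
  have hy : (7:ℝ) ^ α / (6:ℝ) ^ α * (6:ℝ) ^ α = (7:ℝ) ^ α :=
    div_mul_cancel₀ _ (ne_of_gt h6pos)
  have hmain : (5:ℝ) ^ α + 3 * (7:ℝ) ^ α > 4 * (6:ℝ) ^ α := by nlinarith
  refine ⟨?_, hmain⟩
  simp only [f, g]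
  linarith
end

section
/- Let α < 0 be a real number with f(α) < 0 (equivalently, x0 < α < 0 where x0 ≈ −3.09997 is the root of f). Then for every length vector L with square count n(L) = n ≥ 3, one has Ψ_α(L) ≤ f(α), with equality if and only if L is the single-entry list (n). (This is the upper bound in Proposition 1: among polyomino chains in Ω_n, the linear chain L_n uniquely maximizes χ_α for x0 < α < 0.) -/
/-- A length vector: a nonempty list of segment lengths, each at least 2. -/
def LengthVector (L : List ℕ) : Prop := L ≠ [] ∧ ∀ l ∈ L, 2 ≤ l

/-- Square count of a length vector: `l₁ + ⋯ + l_s − (s − 1)`. -/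
def nSq (L : List ℕ) : ℕ := L.sum - (L.length - 1)

/-- Number of external (first or last) entries equal to 2. -/
def e2 (L : List ℕ) : ℕ :=
  ((Finset.range L.length).filter
    (fun j => (j = 0 ∨ j = L.length - 1) ∧ L.getD j 0 = 2)).card

/-- Number of internal entries (neither first nor last) equal to 2. -/
def i2 (L : List ℕ) : ℕ :=
  ((Finset.range L.length).filter
    (fun j => j ≠ 0 ∧ j ≠ L.length - 1 ∧ L.getD j 0 = 2)).card

/-- The weight Ψ_α(L) = f(α)·s + g(α)·e₂(L) + h(α)·i₂(L). -/
noncomputable def psi (α : ℝ) (L : List ℕ) : ℝ :=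
  f α * L.length + g α * e2 L + h α * i2 L

lemma g_nonpos (α : ℝ) (hα : α < 0) : g α ≤ 0 := by
  set a := (5:ℝ) ^ (α/2) with ha
  set b := (7:ℝ) ^ (α/2) with hb
  have ha2 : a * a = (5:ℝ) ^ α := by
    rw [ha, ← Real.rpow_add (by norm_num)]; ring_nf
  have hb2 : b * b = (7:ℝ) ^ α := by
    rw [hb, ← Real.rpow_add (by norm_num)]; ring_nf
  have hab : a * b = (35:ℝ) ^ (α/2) := by
    rw [ha, hb, ← Real.mul_rpow (by norm_num) (by norm_num)]; norm_num
  have h6 : (6:ℝ) ^ α = (36:ℝ) ^ (α/2) := by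
    rw [show α = (2:ℕ) * (α/2) by push_cast; ring,
      Real.rpow_natCast_mul (by norm_num)]
    norm_num
  have h65 : (36:ℝ) ^ (α/2) ≤ (35:ℝ) ^ (α/2) :=
    Real.rpow_le_rpow_of_nonpos (by norm_num) (by norm_num) (by linarith)
  have hamgm : 2 * (a * b) ≤ a * a + b * b := by nlinarith [sq_nonneg (a - b)]
  have : 2 * ((6:ℝ) ^ α) ≤ (5:ℝ) ^ α + (7:ℝ) ^ α := by
    rw [h6, ← ha2, ← hb2]
    calc 2 * (36:ℝ) ^ (α/2) ≤ 2 * (35:ℝ) ^ (α/2) := by linarith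
    _ = 2 * (a * b) := by rw [hab]
    _ ≤ a * a + b * b := hamgm
  simp only [g]; linarith

lemma fh_neg (α : ℝ) (hα : α < 0) : f α + h α < 0 := by
  have h86 : (8:ℝ) ^ α < (6:ℝ) ^ α :=
    Real.rpow_lt_rpow_of_neg (by norm_num) (by norm_num) hα
  simp only [f, h]; linarith

lemma i2_add_two_le (L : List ℕ) (hs : 2 ≤ L.length) : i2 L + 2 ≤ L.length := by
  have hsub : ((Finset.range L.length).filter
      (fun j => j ≠ 0 ∧ j ≠ L.length - 1 ∧ L.getD j 0 = 2)) ⊆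
      (((Finset.range L.length).erase (L.length - 1)).erase 0) := by
    intro j hj
    simp only [Finset.mem_filter, Finset.mem_range] at hj
    simp only [Finset.mem_erase, Finset.mem_range]
    exact ⟨hj.2.1, hj.2.2.1, hj.1⟩
  have hcard : (((Finset.range L.length).erase (L.length - 1)).erase 0).card
      = L.length - 2 := by
    rw [Finset.card_erase_of_mem, Finset.card_erase_of_mem]
    · simp; omega
    · simp; omega
    · simp only [Finset.mem_erase, Finset.mem_range]; omega
  have := Finset.card_le_card hsub
  rw [hcard] at this
  unfold i2
  omega

lemma e2_le_two (L : List ℕ) : e2 L ≤ 2 := by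
  have hsub : ((Finset.range L.length).filter
      (fun j => (j = 0 ∨ j = L.length - 1) ∧ L.getD j 0 = 2)) ⊆
      ({0, L.length - 1} : Finset ℕ) := by
    intro j hj
    simp only [Finset.mem_filter, Finset.mem_range] at hj
    simp only [Finset.mem_insert, Finset.mem_singleton]
    exact hj.2.1
  have := Finset.card_le_card hsub
  have h2 : ({0, L.length - 1} : Finset ℕ).card ≤ 2 := by
    apply le_trans (Finset.card_insert_le _ _)
    simp
  unfold e2
  omega

/-- Proposition 1, upper bound: if α < 0 and f(α) < 0, then every length vector
with square count n ≥ 3 satisfies Ψ_α(L) ≤ f(α), with equality iff L = (n)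
(the linear chain). -/
theorem psi_le_f (α : ℝ) (hα : α < 0) (hf : f α < 0)
    (L : List ℕ) (hL : LengthVector L) (n : ℕ) (hn : nSq L = n) (hn3 : 3 ≤ n) :
    psi α L ≤ f α ∧ (psi α L = f α ↔ L = [n]) := by
  obtain ⟨hne, hall⟩ := hL
  match L, hne with
  | [l], _ =>
    have hl : l = n := by
      have h1 : nSq [l] = l := by simp [nSq]
      omega
    subst hl
    have he : e2 [l] = 0 := by
      simp only [e2, List.length_singleton, Finset.range_one]
      rw [Finset.card_eq_zero, Finset.filter_eq_empty_iff]
      intro j hj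
      simp only [Finset.mem_singleton] at hj
      subst hj
      simp only [List.getD_cons_zero]
      omega
    have hi : i2 [l] = 0 := by
      simp only [i2, List.length_singleton, Finset.range_one]
      rw [Finset.card_eq_zero, Finset.filter_eq_empty_iff]
      intro j hj
      simp only [Finset.mem_singleton] at hj
      subst hj
      simp
    have hpsi : psi α [l] = f α := by
      simp [psi, he, hi]
    exact ⟨hpsi.le, by simp [hpsi]⟩
  | l1 :: l2 :: rest, _ =>
    set L := l1 :: l2 :: rest with hLdef
    have hs : 2 ≤ L.length := by simp [hLdef]
    have hi2 : i2 L + 2 ≤ L.length := i2_add_two_le L hs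
    have he2 : e2 L ≤ 2 := e2_le_two L
    have hg := g_nonpos α hα
    have hfh := fh_neg α hα
    have hkey : psi α L < f α := by
      have hc1 : (i2 L : ℝ) + 2 ≤ (L.length : ℝ) := by exact_mod_cast hi2
      have hc2 : (0:ℝ) ≤ (i2 L : ℝ) := Nat.cast_nonneg _
      have hc3 : (0:ℝ) ≤ (e2 L : ℝ) := Nat.cast_nonneg _
      unfold psi
      nlinarith [mul_nonneg (neg_nonneg.2 hf.le) (by linarith : (0:ℝ) ≤ (L.length : ℝ) - ((i2 L : ℝ) + 2)),
        mul_nonneg (neg_nonneg.2 hfh.le) hc2,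
        mul_nonneg (neg_nonneg.2 hg) hc3]
    refine ⟨hkey.le, ⟨fun hq => absurd hq hkey.ne, fun hq => ?_⟩⟩
    simp [hLdef] at hq
end

section
/- Let α < 0 be a real number with f(α) ≥ 0 (equivalently, α ≤ x0 where x0 ≈ −3.09997 is the root of f). Then for every length vector L with square count n(L) = n ≥ 3, one has Ψ_α(L) ≥ f(α)·(n−1) + 2·g(α) + (n−3)·h(α), with equality if and only if L = (2,2,…,2) with n−1 entries. (This is Proposition 2: among polyomino chains in Ω_n, the zigzag chain Z_n uniquely minimizes χ_α for α ≤ x0.) -/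
lemma sum_ge_two_len (L : List ℕ) (h : ∀ l ∈ L, 2 ≤ l) : 2 * L.length ≤ L.sum := by
  induction L with
  | nil => simp
  | cons a t ih =>
    have ha := h a (by simp)
    have := ih (fun l hl => h l (by simp [hl]))
    simp only [List.length_cons, List.sum_cons]
    omega

lemma eq_replicate_of_sum (L : List ℕ) (h : ∀ l ∈ L, 2 ≤ l) (hs : L.sum = 2 * L.length) :
    L = List.replicate L.length 2 := by
  induction L with
  | nil => simp
  | cons a t ih =>
    have ha := h a (by simp)
    have ht := sum_ge_two_len t (fun l hl => h l (by simp [hl]))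
    simp only [List.length_cons, List.sum_cons] at hs ⊢
    have ha2 : a = 2 := by omega
    have hts : t.sum = 2 * t.length := by omega
    rw [List.replicate_succ, ha2, ih (fun l hl => h l (by simp [hl])) hts]
    simp

lemma e2_replicate (m : ℕ) (hm : 2 ≤ m) : e2 (List.replicate m 2) = 2 := by
  unfold e2
  have hget : ∀ j < m, (List.replicate m 2).getD j 0 = 2 := by
    intro j hj
    simp [List.getD_eq_getElem?_getD, List.getElem?_replicate, hj]
  have : ((Finset.range m).filter
      (fun j => (j = 0 ∨ j = m - 1) ∧ (List.replicate m 2).getD j 0 = 2)) = {0, m - 1} := by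
    ext j
    simp only [Finset.mem_filter, Finset.mem_range, Finset.mem_insert, Finset.mem_singleton]
    constructor
    · rintro ⟨_, hj, _⟩; exact hj
    · rintro (rfl | rfl)
      · exact ⟨by omega, Or.inl rfl, hget 0 (by omega)⟩
      · exact ⟨by omega, Or.inr rfl, hget (m-1) (by omega)⟩
  rw [List.length_replicate, this, Finset.card_pair (by omega)]

lemma i2_replicate (m : ℕ) (hm : 2 ≤ m) : i2 (List.replicate m 2) = m - 2 := by
  unfold i2
  have hget : ∀ j < m, (List.replicate m 2).getD j 0 = 2 := by
    intro j hj
    simp [List.getD_eq_getElem?_getD, List.getElem?_replicate, hj]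
  have : ((Finset.range m).filter
      (fun j => j ≠ 0 ∧ j ≠ m - 1 ∧ (List.replicate m 2).getD j 0 = 2)) = Finset.Ioo 0 (m-1) := by
    ext j
    simp only [Finset.mem_filter, Finset.mem_range, Finset.mem_Ioo, ne_eq]
    constructor
    · rintro ⟨h1, h2, h3, _⟩; omega
    · intro hj
      exact ⟨by omega, by omega, by omega, hget j (by omega)⟩
  rw [List.length_replicate, this, Nat.card_Ioo]
  omega

lemma i2_le (L : List ℕ) (hs : 2 ≤ L.length) : i2 L ≤ L.length - 2 := by
  unfold i2
  calc _ ≤ (Finset.Ioo 0 (L.length - 1)).card := by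
        apply Finset.card_le_card
        intro j hj
        simp only [Finset.mem_filter, Finset.mem_range, ne_eq] at hj
        simp only [Finset.mem_Ioo]
        omega
    _ = L.length - 2 := by rw [Nat.card_Ioo]; omega

lemma e2_le_one (L : List ℕ) (hs : L.length = 1) : e2 L ≤ 1 := by
  unfold e2
  calc _ ≤ (Finset.range L.length).card := Finset.card_filter_le _ _
    _ = 1 := by rw [Finset.card_range, hs]

lemma i2_eq_zero (L : List ℕ) (hs : L.length = 1) : i2 L = 0 := by
  unfold i2
  rw [Finset.card_eq_zero, Finset.filter_eq_empty_iff]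
  intro j hj
  rw [hs] at hj
  simp only [Finset.mem_range] at hj
  interval_cases j
  simp

set_option maxHeartbeats 1000000 in
/-- Proposition 2: if α < 0 and f(α) ≥ 0, then every length vector with square
count n ≥ 3 satisfies Ψ_α(L) ≥ f(α)(n−1) + 2g(α) + (n−3)h(α), with equality iff
L = (2,…,2) with n−1 entries (the zigzag chain). -/
theorem psi_ge_zigzag_of_f_nonneg (α : ℝ) (hα : α < 0) (hf : 0 ≤ f α)
    (L : List ℕ) (hL : LengthVector L) (n : ℕ) (hn : nSq L = n) (hn3 : 3 ≤ n) :
    f α * ((n : ℝ) - 1) + 2 * g α + ((n : ℝ) - 3) * h α ≤ psi α L ∧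
      (psi α L = f α * ((n : ℝ) - 1) + 2 * g α + ((n : ℝ) - 3) * h α ↔
        L = List.replicate (n - 1) 2) := by
  obtain ⟨hne, h2⟩ := hL
  have hs1 : 1 ≤ L.length := List.length_pos_iff.mpr hne
  have hsum2 : 2 * L.length ≤ L.sum := sum_ge_two_len L h2
  unfold nSq at hn
  have hsum : L.sum = n + L.length - 1 := by omega
  have hsn : L.length + 1 ≤ n := by omega
  -- real analytic facts
  have hA : (8:ℝ)^α < (6:ℝ)^α := Real.rpow_lt_rpow_of_neg (by norm_num) (by norm_num) hα
  have h76 : (7:ℝ)^α < (6:ℝ)^α := Real.rpow_lt_rpow_of_neg (by norm_num) (by norm_num) hα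
  have hg : g α < 0 := by
    have ha2 : (5:ℝ)^(α/2) * (5:ℝ)^(α/2) = (5:ℝ)^α := by
      rw [← Real.rpow_add (by norm_num)]; ring_nf
    have hb2 : (7:ℝ)^(α/2) * (7:ℝ)^(α/2) = (7:ℝ)^α := by
      rw [← Real.rpow_add (by norm_num)]; ring_nf
    have hab : (5:ℝ)^(α/2) * (7:ℝ)^(α/2) = (35:ℝ)^(α/2) := by
      rw [← Real.mul_rpow (by norm_num) (by norm_num)]; norm_num
    have h66 : (6:ℝ)^(α/2) * (6:ℝ)^(α/2) = (6:ℝ)^α := by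
      rw [← Real.rpow_add (by norm_num)]; ring_nf
    have h36 : (6:ℝ)^(α/2) * (6:ℝ)^(α/2) = (36:ℝ)^(α/2) := by
      rw [← Real.mul_rpow (by norm_num) (by norm_num)]; norm_num
    have h3536 : (36:ℝ)^(α/2) < (35:ℝ)^(α/2) :=
      Real.rpow_lt_rpow_of_neg (by norm_num) (by norm_num) (by linarith)
    have hba : (7:ℝ)^(α/2) < (5:ℝ)^(α/2) :=
      Real.rpow_lt_rpow_of_neg (by norm_num) (by norm_num) (by linarith)
    have hsq : (0:ℝ) < ((5:ℝ)^(α/2) - (7:ℝ)^(α/2))^2 := pow_pos (sub_pos.mpr hba) 2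
    unfold g
    nlinarith [hsq, h3536, ha2, hb2, hab, h66, h36]
  have hfh : f α + h α = (8:ℝ)^α - (6:ℝ)^α := by unfold f h; ring
  have hhneg : h α < 0 := by linarith
  -- key identity (pure ring identity)
  have key : psi α L =
      f α * ((n : ℝ) - 1) + 2 * g α + ((n : ℝ) - 3) * h α +
      (((n:ℝ) - 1 - L.length) * ((6:ℝ)^α - (8:ℝ)^α) + (-(g α)) * (2 - (e2 L : ℝ)) +
        (-(h α)) * (((L.length : ℝ) - 2) - (i2 L : ℝ))) := by
    unfold psi f g h; ring
  have hdR : (0:ℝ) ≤ (n:ℝ) - 1 - L.length := by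
    have : ((L.length + 1 : ℕ) : ℝ) ≤ (n:ℝ) := by exact_mod_cast hsn
    push_cast at this; linarith
  have heR : (e2 L : ℝ) ≤ 2 := by exact_mod_cast e2_le_two L
  have t1 : (0:ℝ) ≤ ((n:ℝ) - 1 - L.length) * ((6:ℝ)^α - (8:ℝ)^α) :=
    mul_nonneg hdR (by linarith)
  have t2 : (0:ℝ) ≤ (-(g α)) * (2 - (e2 L : ℝ)) := mul_nonneg (by linarith) (by linarith)
  rcases Nat.lt_or_ge L.length 2 with hslt | hsge
  · -- L.length = 1
    have hs1' : L.length = 1 := by omega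
    have hi0 : i2 L = 0 := i2_eq_zero L hs1'
    have hnR : (3:ℝ) ≤ (n:ℝ) := by exact_mod_cast hn3
    have t1' : (0:ℝ) ≤ ((n:ℝ) - 3) * ((6:ℝ)^α - (8:ℝ)^α) :=
      mul_nonneg (by linarith) (by linarith)
    have he0 : e2 L = 0 := by
      obtain ⟨a, rfl⟩ := List.length_eq_one_iff.mp hs1'
      have hae : a = n := by simp at hsum; omega
      unfold e2
      rw [Finset.card_eq_zero, Finset.filter_eq_empty_iff]
      intro j hj
      simp only [Finset.mem_range, List.length_singleton] at hj
      interval_cases j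
      simp only [List.length_singleton, List.getD, Option.getD_some, not_and]
      intro _
      show ¬ ([a].getD 0 0 = 2)
      simp [hae]
      omega
    have hstrict : f α * ((n : ℝ) - 1) + 2 * g α + ((n : ℝ) - 3) * h α < psi α L := by
      rw [key, hs1', hi0, he0]
      push_cast
      have hfval : f α = 2 * (5:ℝ)^α - 6 * (6:ℝ)^α + 4 * (7:ℝ)^α := rfl
      have hgval : g α = 2 * (6:ℝ)^α - (5:ℝ)^α - (7:ℝ)^α := rfl
      have hhval : h α = 5 * (6:ℝ)^α - 2 * (5:ℝ)^α - 4 * (7:ℝ)^α + (8:ℝ)^α := rfl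
      linarith [t1', h76, hA, hg]
    refine ⟨le_of_lt hstrict, ?_, ?_⟩
    · intro heq; exfalso; linarith
    · intro hrep
      exfalso
      have : L.length = n - 1 := by rw [hrep]; simp
      omega
  · -- L.length ≥ 2
    have hiR : (i2 L : ℝ) ≤ (L.length : ℝ) - 2 := by
      have := i2_le L hsge
      have h2R : ((L.length - 2 : ℕ) : ℝ) = (L.length : ℝ) - 2 := by
        rw [Nat.cast_sub hsge]; norm_num
      calc (i2 L : ℝ) ≤ ((L.length - 2 : ℕ) : ℝ) := by exact_mod_cast this
        _ = _ := h2R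
    have t3 : (0:ℝ) ≤ (-(h α)) * (((L.length : ℝ) - 2) - (i2 L : ℝ)) :=
      mul_nonneg (by linarith) (by linarith)
    constructor
    · linarith [key, t1, t2, t3]
    constructor
    · intro heq
      have ht1 : ((n:ℝ) - 1 - L.length) * ((6:ℝ)^α - (8:ℝ)^α) = 0 := by linarith [key]
      have hd0 : (n:ℝ) - 1 - L.length = 0 := by
        rcases mul_eq_zero.mp ht1 with h' | h'
        · exact h'
        · linarith
      have hslen : L.length = n - 1 := by
        have : (L.length : ℝ) = ((n - 1 : ℕ) : ℝ) := by
          rw [Nat.cast_sub (by omega)]; push_cast; linarith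
        exact_mod_cast this
      have hsum' : L.sum = 2 * L.length := by omega
      have := eq_replicate_of_sum L h2 hsum'
      rw [hslen] at this
      exact this
    · intro hrep
      subst hrep
      have hlen : (List.replicate (n-1) 2).length = n - 1 := by simp
      have hm : 2 ≤ n - 1 := by omega
      unfold psi
      rw [hlen, e2_replicate (n-1) hm, i2_replicate (n-1) hm]
      have c1 : ((n - 1 : ℕ) : ℝ) = (n:ℝ) - 1 := by rw [Nat.cast_sub (by omega)]; norm_num
      have c2 : ((n - 1 - 2 : ℕ) : ℝ) = (n:ℝ) - 3 := by
        rw [Nat.cast_sub (by omega : 2 ≤ n - 1), Nat.cast_sub (by omega : 1 ≤ n)]; ring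
      rw [c1, c2]
      push_cast
      ring
end

section
/- Let α < 0 be a real number with f(α) = 0 (i.e., α equals the root x0 ≈ −3.09997 of f). Then for every length vector L with square count n(L) ≥ 3, one has Ψ_α(L) ≤ 0, with equality if and only if no entry of L equals 2. (This is Proposition 3: at α = x0, every polyomino chain in Ω_n satisfies χ_α(B_n) ≤ 3·6^α n + (2·4^α+2·5^α+6^α−4·7^α), with equality exactly when B_n has no segment of length 2.) -/
/-- Proposition 3: if α < 0 and f(α) = 0, then every length vector with square
count ≥ 3 satisfies Ψ_α(L) ≤ 0, with equality iff no entry of L equals 2. -/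
theorem psi_nonpos_at_root (α : ℝ) (hα : α < 0) (hf : f α = 0)
    (L : List ℕ) (hL : LengthVector L) (hn3 : 3 ≤ nSq L) :
    psi α L ≤ 0 ∧ (psi α L = 0 ↔ 2 ∉ L) := by
  have h75 : (7:ℝ) ^ α < (5:ℝ) ^ α := Real.rpow_lt_rpow_of_neg (by norm_num) (by norm_num) hα
  have h86 : (8:ℝ) ^ α < (6:ℝ) ^ α := Real.rpow_lt_rpow_of_neg (by norm_num) (by norm_num) hα
  have hg : g α < 0 := by unfold f at hf; unfold g; linarith
  have hh : h α < 0 := by unfold f at hf; unfold h; linarith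
  have hpsi : psi α L = g α * e2 L + h α * i2 L := by
    unfold psi; rw [hf]; ring
  have hmem : 2 ∉ L ↔ (e2 L = 0 ∧ i2 L = 0) := by
    have key2 : (2 ∈ L) ↔ ∃ j, ∃ h : j < L.length, L.getD j 0 = 2 := by
      rw [List.mem_iff_getElem]
      constructor
      · rintro ⟨j, hj, hje⟩
        exact ⟨j, hj, by rw [List.getD_eq_getElem _ _ hj]; exact hje⟩
      · rintro ⟨j, hj, hje⟩
        rw [List.getD_eq_getElem _ _ hj] at hje
        exact ⟨j, hj, hje⟩
    constructor
    · intro hnot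
      have key : ∀ j, j < L.length → L.getD j 0 ≠ 2 := by
        intro j hj h2
        exact hnot (key2.mpr ⟨j, hj, h2⟩)
      constructor
      · unfold e2
        rw [Finset.card_eq_zero, Finset.filter_eq_empty_iff]
        intro j hj
        simp only [Finset.mem_range] at hj
        rintro ⟨-, h2⟩
        exact key j hj h2
      · unfold i2
        rw [Finset.card_eq_zero, Finset.filter_eq_empty_iff]
        intro j hj
        simp only [Finset.mem_range] at hj
        rintro ⟨-, -, h2⟩
        exact key j hj h2
    · rintro ⟨he, hi⟩ hmem2
      obtain ⟨j, hj, hgd⟩ := key2.mp hmem2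
      by_cases hc : j = 0 ∨ j = L.length - 1
      · have hjm : j ∈ (Finset.range L.length).filter
            (fun j => (j = 0 ∨ j = L.length - 1) ∧ L.getD j 0 = 2) :=
          Finset.mem_filter.mpr ⟨Finset.mem_range.mpr hj, hc, hgd⟩
        have : 0 < e2 L := Finset.card_pos.mpr ⟨j, hjm⟩
        omega
      · push_neg at hc
        have hjm : j ∈ (Finset.range L.length).filter
            (fun j => j ≠ 0 ∧ j ≠ L.length - 1 ∧ L.getD j 0 = 2) :=
          Finset.mem_filter.mpr ⟨Finset.mem_range.mpr hj, hc.1, hc.2, hgd⟩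
        have : 0 < i2 L := Finset.card_pos.mpr ⟨j, hjm⟩
        omega
  have he2 : (0:ℝ) ≤ e2 L := Nat.cast_nonneg _
  have hi2 : (0:ℝ) ≤ i2 L := Nat.cast_nonneg _
  constructor
  · rw [hpsi]
    nlinarith
  · rw [hpsi, hmem]
    constructor
    · intro h0
      have t1 : g α * e2 L ≤ 0 := mul_nonpos_of_nonpos_of_nonneg hg.le he2
      have t2 : h α * i2 L ≤ 0 := mul_nonpos_of_nonpos_of_nonneg hh.le hi2
      have e0 : (e2 L : ℝ) = 0 := by
        by_contra hne
        have : (0:ℝ) < e2 L := lt_of_le_of_ne he2 (Ne.symm hne)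
        nlinarith
      have i0 : (i2 L : ℝ) = 0 := by
        by_contra hne
        have : (0:ℝ) < i2 L := lt_of_le_of_ne hi2 (Ne.symm hne)
        nlinarith
      exact ⟨Nat.cast_eq_zero.mp e0, Nat.cast_eq_zero.mp i0⟩
    · rintro ⟨he, hi⟩
      rw [he, hi]
      simp
end

section
/- Let α < 0 be a real number with f(α) > 0 and f(α) + g(α) < 0 (equivalently, x1 < α < x0, where x0 ≈ −3.09997 is the root of f and x1 ≈ −5.46343 is the root of f+g). Then for every length vector L with square count n(L) = n ≥ 3, one has Ψ_α(L) ≤ f(α)·⌊(n−1)/2⌋, with equality if and only if every entry of L belongs to {3,4} and at most one entry equals 4. (This is Proposition 4, first part: for x1 < α < x0 the maximizers of χ_α over Ω_n are exactly the chains in which no segment has length 2 or length ≥ 5 and at most one segment has length 4.) -/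
lemma filter_getD_eq_count (L : List ℕ) :
    ((Finset.range L.length).filter (fun j => L.getD j 0 = 2)).card = L.count 2 := by
  induction L with
  | nil => simp
  | cons a T ih =>
    rw [List.count_cons]
    simp only [List.length_cons, Finset.card_filter, Finset.sum_range_succ',
      List.getD_cons_succ, List.getD_cons_zero]
    rw [← Finset.card_filter, ih]
    by_cases ha : a = 2 <;> simp [ha, List.count_cons]

lemma e2_add_i2 (L : List ℕ) : e2 L + i2 L = L.count 2 := by
  classical
  rw [← filter_getD_eq_count L]
  unfold e2 i2
  rw [Finset.card_filter, Finset.card_filter, Finset.card_filter, ← Finset.sum_add_distrib]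
  apply Finset.sum_congr rfl
  intro j _
  by_cases h1 : j = 0 <;> by_cases h2 : j = L.length - 1 <;>
    by_cases h3 : L.getD j 0 = 2 <;> simp [h1, h2, h3]

lemma two_mul_len_le_sum (L : List ℕ) (hL : ∀ l ∈ L, 2 ≤ l) : 2 * L.length ≤ L.sum := by
  induction L with
  | nil => simp
  | cons a T ih =>
    have ha := hL a List.mem_cons_self
    have := ih (fun l hl => hL l (List.mem_cons_of_mem a hl))
    simp only [List.length_cons, List.sum_cons]
    omega

lemma three_mul_len_le_sum_add_count (L : List ℕ) (hL : ∀ l ∈ L, 2 ≤ l) :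
    3 * L.length ≤ L.sum + L.count 2 := by
  induction L with
  | nil => simp
  | cons a T ih =>
    have ha := hL a List.mem_cons_self
    have := ih (fun l hl => hL l (List.mem_cons_of_mem a hl))
    simp only [List.length_cons, List.sum_cons, List.count_cons]
    by_cases h2 : a = 2 <;> simp [h2] <;> omega

lemma three_mul_len_le_sum (L : List ℕ) (hL : ∀ l ∈ L, 3 ≤ l) : 3 * L.length ≤ L.sum := by
  induction L with
  | nil => simp
  | cons a T ih =>
    have ha := hL a List.mem_cons_self
    have := ih (fun l hl => hL l (List.mem_cons_of_mem a hl))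
    simp only [List.length_cons, List.sum_cons]
    omega

lemma elem_slack (L : List ℕ) (hL : ∀ l ∈ L, 3 ≤ l) :
    ∀ l ∈ L, 3 * L.length + l ≤ L.sum + 3 := by
  induction L with
  | nil => simp
  | cons a T ih =>
    intro l hl
    have ha := hL a List.mem_cons_self
    have hT : ∀ x ∈ T, 3 ≤ x := fun x hx => hL x (List.mem_cons_of_mem a hx)
    have hTs := three_mul_len_le_sum T hT
    simp only [List.length_cons, List.sum_cons]
    rcases List.mem_cons.mp hl with rfl | hl
    · omega
    · have := ih hT l hl
      omega

lemma sum_eq_of_mem34 (L : List ℕ) (hL : ∀ l ∈ L, l = 3 ∨ l = 4) :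
    L.sum = 3 * L.length + L.count 4 := by
  induction L with
  | nil => simp
  | cons a T ih =>
    have ha := hL a List.mem_cons_self
    have := ih (fun l hl => hL l (List.mem_cons_of_mem a hl))
    simp only [List.length_cons, List.sum_cons, List.count_cons]
    rcases ha with rfl | rfl <;> simp <;> omega

set_option maxHeartbeats 1000000 in
/-- Proposition 4, first part: if α < 0, f(α) > 0 and f(α) + g(α) < 0, then
every length vector with square count n ≥ 3 satisfies
Ψ_α(L) ≤ f(α)·⌊(n−1)/2⌋, with equality iff every entry of L is 3 or 4 and at
most one entry equals 4. -/
theorem psi_le_of_fg_neg (α : ℝ) (hα : α < 0) (hf : 0 < f α) (hfg : f α + g α < 0)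
    (L : List ℕ) (hL : LengthVector L) (n : ℕ) (hn : nSq L = n) (hn3 : 3 ≤ n) :
    psi α L ≤ f α * (((n - 1) / 2 : ℕ) : ℝ) ∧
      (psi α L = f α * (((n - 1) / 2 : ℕ) : ℝ) ↔
        (∀ l ∈ L, l = 3 ∨ l = 4) ∧ L.count 4 ≤ 1) := by
  obtain ⟨hne, h2le⟩ := hL
  -- basic sign facts
  have h86 : (8:ℝ) ^ α < (6:ℝ) ^ α :=
    Real.rpow_lt_rpow_of_neg (by norm_num) (by norm_num) hα
  have h87 : (8:ℝ) ^ α < (7:ℝ) ^ α :=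
    Real.rpow_lt_rpow_of_neg (by norm_num) (by norm_num) hα
  have hg : g α < 0 := by linarith
  have hfh : f α + h α < 0 := by unfold f h; linarith
  have hf2h : f α + 2 * h α < 0 := by unfold f g h at *; linarith
  have hf2g : f α + 2 * g α < 0 := by linarith
  -- notation
  set s := L.length with hs
  set t := L.count 2 with ht
  set a := e2 L with ha
  set b := i2 L with hb
  set m := (n - 1) / 2 with hm
  have hab : a + b = t := e2_add_i2 L
  have hs1 : 1 ≤ s := List.length_pos_iff.mpr hne
  have hsum2 : 2 * s ≤ L.sum := two_mul_len_le_sum L h2le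
  have hsum3 : 3 * s ≤ L.sum + t := three_mul_len_le_sum_add_count L h2le
  have hnsum : L.sum - (s - 1) = n := hn
  have hsumn : L.sum = n + s - 1 := by omega
  have hpsi : psi α L = f α * s + g α * a + h α * b := rfl
  have htle : t ≤ s := List.count_le_length
  by_cases ht0 : t = 0
  · -- no entry equal to 2
    have ha0 : a = 0 := by omega
    have hb0 : b = 0 := by omega
    have hsm : s ≤ m := by omega
    have hge3 : ∀ l ∈ L, 3 ≤ l := by
      intro l hl
      have := h2le l hl
      have : l ≠ 2 := by
        intro h2
        have : 2 ∈ L := h2 ▸ hl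
        have := List.count_pos_iff.mpr this
        omega
      omega
    have hle : psi α L ≤ f α * m := by
      rw [hpsi, ha0, hb0]
      push_cast
      have : (s:ℝ) ≤ m := Nat.cast_le.mpr hsm
      nlinarith
    refine ⟨hle, ?_, ?_⟩
    · -- equality → structure
      intro heq
      rw [hpsi, ha0, hb0] at heq
      push_cast at heq
      have hsm' : (s:ℝ) = m := by
        have := mul_left_cancel₀ (ne_of_gt hf) (by linarith : f α * (s:ℝ) = f α * m)
        linarith
      have hsme : s = m := Nat.cast_injective hsm'
      have hsumle : L.sum ≤ 3 * s + 1 := by omega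
      have h34 : ∀ l ∈ L, l = 3 ∨ l = 4 := by
        intro l hl
        have := elem_slack L hge3 l hl
        have := hge3 l hl
        omega
      refine ⟨h34, ?_⟩
      have := sum_eq_of_mem34 L h34
      omega
    · -- structure → equality
      rintro ⟨h34, hc4⟩
      have hsum4 := sum_eq_of_mem34 L h34
      have hsme : s = m := by omega
      rw [hpsi, ha0, hb0, hsme]
      push_cast
      ring
  · -- some entry equals 2 : strict inequality
    have ht1 : 1 ≤ t := by omega
    have hlt : psi α L < f α * m := by
      rw [hpsi]
      have hkey : 2 * s ≤ 2 * m + 1 + t := by omega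
      have hcast : 2 * (s:ℝ) ≤ 2 * m + 1 + t := by exact_mod_cast hkey
      have habR : (a:ℝ) + b = t := by exact_mod_cast hab
      have hfs : f α * s ≤ f α * (2 * (m:ℝ) + 1 + t) / 2 := by
        have := mul_le_mul_of_nonneg_left hcast (le_of_lt hf)
        linarith
      have ha0 : (0:ℝ) ≤ a := Nat.cast_nonneg a
      have hb0 : (0:ℝ) ≤ b := Nat.cast_nonneg b
      have key : f α * (1 + (a:ℝ) + b) / 2 + g α * a + h α * b < 0 := by
        rcases (by omega : 1 ≤ a ∨ 1 ≤ b) with hc | hc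
        · have h1 : (1:ℝ) ≤ a := by exact_mod_cast hc
          have e1 : f α * (1 + (a:ℝ) + b) / 2 + g α * a + h α * b
              = (f α + g α) + ((a:ℝ) - 1) * (f α + 2 * g α) / 2
                + (b:ℝ) * (f α + 2 * h α) / 2 := by ring
          have p1 : (0:ℝ) ≤ ((a:ℝ) - 1) * (-(f α + 2 * g α)) :=
            mul_nonneg (by linarith) (by linarith)
          have p2 : (0:ℝ) ≤ (b:ℝ) * (-(f α + 2 * h α)) := mul_nonneg hb0 (by linarith)
          rw [e1]; nlinarith [p1, p2]
        · have h1 : (1:ℝ) ≤ b := by exact_mod_cast hc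
          have e1 : f α * (1 + (a:ℝ) + b) / 2 + g α * a + h α * b
              = (f α + h α) + ((b:ℝ) - 1) * (f α + 2 * h α) / 2
                + (a:ℝ) * (f α + 2 * g α) / 2 := by ring
          have p1 : (0:ℝ) ≤ ((b:ℝ) - 1) * (-(f α + 2 * h α)) :=
            mul_nonneg (by linarith) (by linarith)
          have p2 : (0:ℝ) ≤ (a:ℝ) * (-(f α + 2 * g α)) := mul_nonneg ha0 (by linarith)
          rw [e1]; nlinarith [p1, p2]
      have e2' : f α * (2 * (m:ℝ) + 1 + t) / 2
          = f α * m + f α * (1 + (a:ℝ) + b) / 2 := by rw [← habR]; ring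
      linarith
    refine ⟨le_of_lt hlt, ?_, ?_⟩
    · intro heq; exact absurd heq (ne_of_lt hlt)
    · rintro ⟨h34, -⟩
      have h2mem : 2 ∈ L := List.count_pos_iff.mp (by omega)
      rcases h34 2 h2mem with h | h <;> omega
end

section
/- Let α be any real number, let L = (l_1, l_2, …, l_s) be a length vector with s ≥ 2 and l_1 ≥ 3, and let L' = (2,2,…,2, l_2, …, l_s) be the length vector obtained by replacing the first entry l_1 by l_1 − 1 copies of 2. Then n(L') = n(L) and Ψ_α(L') − Ψ_α(L) = g(α) + (l_1 − 2)·(f(α) + h(α)). In particular, if α < 0 then Ψ_α(L') < Ψ_α(L). (This is the key transformation used in the proof of Proposition 2 to show that a minimizer has all external segments of length 2.) -/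
/- ## Auxiliary lemmas -/

lemma card_filter_Ico_shift (a n : ℕ) (p : ℕ → Prop) [DecidablePred p] :
    ((Finset.Ico a (a + n)).filter p).card
      = ((Finset.range n).filter fun j => p (a + j)).card := by
  apply Finset.card_bij' (fun j _ => j - a) (fun j _ => a + j)
  · intro j hj
    simp only [Finset.mem_filter, Finset.mem_Ico] at hj
    simp only [Finset.mem_filter, Finset.mem_range]
    refine ⟨by omega, ?_⟩
    have : a + (j - a) = j := by omega
    rw [this]; exact hj.2
  · intro j hj
    simp only [Finset.mem_filter, Finset.mem_range] at hj
    simp only [Finset.mem_filter, Finset.mem_Ico]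
    exact ⟨by omega, hj.2⟩
  · intro j hj
    simp only [Finset.mem_filter, Finset.mem_Ico] at hj
    omega
  · intro j hj
    omega

lemma getD_replicate_lt {m j : ℕ} (hj : j < m) :
    (List.replicate m (2:ℕ)).getD j 0 = 2 := by
  rw [List.getD_eq_getElem?_getD, List.getElem?_replicate]
  simp [hj]

/-- The transformation replacing a first entry l₁ ≥ 3 by l₁ − 1 copies of 2
preserves the square count and changes Ψ_α by g(α) + (l₁−2)(f(α)+h(α)); in
particular it strictly decreases Ψ_α when α < 0. -/
theorem psi_replace_first (α : ℝ) (l1 : ℕ) (hl1 : 3 ≤ l1)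
    (T : List ℕ) (hT : T ≠ []) (hT2 : ∀ l ∈ T, 2 ≤ l) :
    nSq (List.replicate (l1 - 1) 2 ++ T) = nSq (l1 :: T) ∧
    psi α (List.replicate (l1 - 1) 2 ++ T) - psi α (l1 :: T) =
      g α + ((l1 : ℝ) - 2) * (f α + h α) ∧
    (α < 0 → psi α (List.replicate (l1 - 1) 2 ++ T) < psi α (l1 :: T)) := by
  obtain ⟨k, rfl⟩ : ∃ k, l1 = k + 3 := ⟨l1 - 3, by omega⟩
  obtain ⟨t, ht⟩ : ∃ t, T.length = t + 1 := ⟨T.length - 1, by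
    cases T with
    | nil => exact absurd rfl hT
    | cons a l => simp⟩
  have hrep : k + 3 - 1 = k + 2 := by omega
  rw [hrep]
  set A : List ℕ := List.replicate (k + 2) 2 with hA
  have hAlen : A.length = k + 2 := List.length_replicate
  -- lengths
  have hlen' : (A ++ T).length = k + t + 3 := by
    rw [List.length_append, hAlen, ht]; omega
  have hlenc : ((k + 3) :: T).length = t + 2 := by
    rw [List.length_cons, ht]
  -- getD facts
  have hgetD_lo : ∀ j < k + 2, (A ++ T).getD j 0 = 2 := by
    intro j hj
    rw [List.getD_append _ _ _ _ (by omega), hA]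
    exact getD_replicate_lt hj
  have hgetD_hi : ∀ j, (A ++ T).getD (k + 2 + j) 0 = T.getD j 0 := by
    intro j
    rw [List.getD_append_right _ _ _ _ (by omega)]
    congr 1
    omega
  -- the "Y" quantity: whether the last entry of T is 2
  set Y : ℕ := if T.getD t 0 = 2 then 1 else 0 with hY
  -- the "X" quantity: internal 2's coming from T
  set X : ℕ := ((Finset.range t).filter fun j => T.getD j 0 = 2).card with hX
  -- e2 of (k+3) :: T
  have he2c : e2 ((k + 3) :: T) = Y := by
    unfold e2
    rw [hlenc]
    have : (Finset.range (t + 2)).filter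
        (fun j => (j = 0 ∨ j = t + 2 - 1) ∧ ((k + 3) :: T).getD j 0 = 2)
        = if T.getD t 0 = 2 then {t + 1} else ∅ := by
      split_ifs with hc
      · ext j
        simp only [Finset.mem_filter, Finset.mem_range, Finset.mem_singleton]
        constructor
        · rintro ⟨hj, h0 | h1, h2⟩
          · subst h0; simp [List.getD_cons_zero] at h2
          · omega
        · rintro rfl
          exact ⟨by omega, Or.inr (by omega), by simpa [List.getD_cons_succ] using hc⟩
      · ext j
        simp only [Finset.mem_filter, Finset.mem_range, Finset.notMem_empty, iff_false]
        rintro ⟨hj, h0 | h1, h2⟩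
        · subst h0; simp [List.getD_cons_zero] at h2
        · have hjt : j = t + 1 := by omega
          subst hjt
          rw [List.getD_cons_succ] at h2
          exact hc h2
    rw [this, hY]
    split_ifs <;> simp
  -- e2 of A ++ T
  have he2' : e2 (A ++ T) = 1 + Y := by
    unfold e2
    rw [hlen']
    have : (Finset.range (k + t + 3)).filter
        (fun j => (j = 0 ∨ j = k + t + 3 - 1) ∧ (A ++ T).getD j 0 = 2)
        = if T.getD t 0 = 2 then {0, k + t + 2} else {0} := by
      split_ifs with hc
      · ext j
        simp only [Finset.mem_filter, Finset.mem_range, Finset.mem_insert, Finset.mem_singleton]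
        constructor
        · rintro ⟨hj, h0 | h1, h2⟩
          · exact Or.inl h0
          · exact Or.inr (by omega)
        · rintro (rfl | rfl)
          · exact ⟨by omega, Or.inl rfl, hgetD_lo 0 (by omega)⟩
          · refine ⟨by omega, Or.inr (by omega), ?_⟩
            have : k + t + 2 = k + 2 + t := by omega
            rw [this, hgetD_hi]
            exact hc
      · ext j
        simp only [Finset.mem_filter, Finset.mem_range, Finset.mem_singleton]
        constructor
        · rintro ⟨hj, h0 | h1, h2⟩
          · exact h0
          · exfalso
            have : j = k + 2 + t := by omega
            subst this
            rw [hgetD_hi] at h2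
            exact hc h2
        · rintro rfl
          exact ⟨by omega, Or.inl rfl, hgetD_lo 0 (by omega)⟩
    rw [this, hY]
    split_ifs with hc
    · rw [Finset.card_insert_of_notMem (by simp), Finset.card_singleton]
    · simp
  -- i2 of (k+3) :: T
  have hi2c : i2 ((k + 3) :: T) = X := by
    unfold i2
    rw [hlenc]
    have h1 : (Finset.range (t + 2)).filter
        (fun j => j ≠ 0 ∧ j ≠ t + 2 - 1 ∧ ((k + 3) :: T).getD j 0 = 2)
        = (Finset.Ico 1 (1 + t)).filter (fun j => ((k + 3) :: T).getD j 0 = 2) := by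
      ext j
      simp only [Finset.mem_filter, Finset.mem_range, Finset.mem_Ico]
      constructor
      · rintro ⟨hj, h0, h1, h2⟩
        exact ⟨⟨by omega, by omega⟩, h2⟩
      · rintro ⟨⟨ha, hb⟩, h2⟩
        exact ⟨by omega, by omega, by omega, h2⟩
    rw [h1, card_filter_Ico_shift, hX]
    congr 1
    apply Finset.filter_congr
    intro j hj
    have : 1 + j = j + 1 := by omega
    rw [this, List.getD_cons_succ]
  -- i2 of A ++ T
  have hi2' : i2 (A ++ T) = (k + 1) + X := by
    unfold i2
    rw [hlen']
    have h1 : (Finset.range (k + t + 3)).filter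
        (fun j => j ≠ 0 ∧ j ≠ k + t + 3 - 1 ∧ (A ++ T).getD j 0 = 2)
        = (Finset.Ico 1 (k + t + 2)).filter (fun j => (A ++ T).getD j 0 = 2) := by
      ext j
      simp only [Finset.mem_filter, Finset.mem_range, Finset.mem_Ico]
      constructor
      · rintro ⟨hj, h0, h1, h2⟩
        exact ⟨⟨by omega, by omega⟩, h2⟩
      · rintro ⟨⟨ha, hb⟩, h2⟩
        exact ⟨by omega, by omega, by omega, h2⟩
    have hsplit : Finset.Ico 1 (k + t + 2)
        = Finset.Ico 1 (k + 2) ∪ Finset.Ico (k + 2) (k + t + 2) :=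
      (Finset.Ico_union_Ico_eq_Ico (by omega) (by omega)).symm
    rw [h1, hsplit, Finset.filter_union,
      Finset.card_union_of_disjoint
        (Finset.disjoint_filter_filter (Finset.Ico_disjoint_Ico_consecutive 1 (k + 2) (k + t + 2)))]
    have hfirst : (Finset.Ico 1 (k + 2)).filter (fun j => (A ++ T).getD j 0 = 2)
        = Finset.Ico 1 (k + 2) := by
      apply Finset.filter_true_of_mem
      intro j hj
      rw [Finset.mem_Ico] at hj
      exact hgetD_lo j hj.2
    have hsecond : ((Finset.Ico (k + 2) (k + t + 2)).filter
        (fun j => (A ++ T).getD j 0 = 2)).card = X := by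
      have : Finset.Ico (k + 2) (k + t + 2) = Finset.Ico (k + 2) (k + 2 + t) := by
        congr 1; omega
      rw [this, card_filter_Ico_shift, hX]
      congr 1
      apply Finset.filter_congr
      intro j hj
      rw [hgetD_hi]
    rw [hfirst, hsecond, Nat.card_Ico]
    omega
  -- square count
  have hn : nSq (A ++ T) = nSq ((k + 3) :: T) := by
    unfold nSq
    rw [List.sum_append, List.sum_cons, hlen', hlenc, hA, List.sum_replicate,
      smul_eq_mul]
    omega
  -- psi difference
  have hdiff : psi α (A ++ T) - psi α ((k + 3) :: T)
      = g α + ((k + 3 : ℕ) - 2 : ℝ) * (f α + h α) := by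
    unfold psi
    rw [he2c, he2', hi2c, hi2', hlen', hlenc]
    push_cast
    ring
  refine ⟨hn, hdiff, ?_⟩
  intro hα
  have h5 : (0:ℝ) < (5:ℝ) ^ α := Real.rpow_pos_of_pos (by norm_num) α
  have h6 : (0:ℝ) < (6:ℝ) ^ α := Real.rpow_pos_of_pos (by norm_num) α
  have h7 : (0:ℝ) < (7:ℝ) ^ α := Real.rpow_pos_of_pos (by norm_num) α
  have h86 : (8:ℝ) ^ α < (6:ℝ) ^ α :=
    Real.rpow_lt_rpow_of_neg (by norm_num) (by norm_num) hα
  have h3635 : (36:ℝ) ^ α < (35:ℝ) ^ α :=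
    Real.rpow_lt_rpow_of_neg (by norm_num) (by norm_num) hα
  have h36 : (36:ℝ) ^ α = (6:ℝ) ^ α * (6:ℝ) ^ α := by
    rw [← Real.mul_rpow (by norm_num) (by norm_num)]; norm_num
  have h35 : (35:ℝ) ^ α = (5:ℝ) ^ α * (7:ℝ) ^ α := by
    rw [← Real.mul_rpow (by norm_num) (by norm_num)]; norm_num
  have hg : g α < 0 := by
    unfold g
    nlinarith [sq_nonneg ((5:ℝ) ^ α - (7:ℝ) ^ α)]
  have hfh : f α + h α = (8:ℝ) ^ α - (6:ℝ) ^ α := by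
    unfold f h; ring
  have hk : (0:ℝ) ≤ (k : ℝ) + 1 := by positivity
  have hprod : ((k + 3 : ℕ) - 2 : ℝ) * (f α + h α) ≤ 0 := by
    have : ((k + 3 : ℕ) - 2 : ℝ) = (k : ℝ) + 1 := by push_cast; ring
    rw [this, hfh]
    exact mul_nonpos_of_nonneg_of_nonpos hk (by linarith)
  linarith [hdiff]
end
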